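/- arXiv:1407.5552 — 3 statements merged into one kernel-verified Lean document; each statement's English description precedes it below -/
import Mathlib

section
/- Let p be a prime and r a positive integer with p^r > 2. For every real x with |x| < 1, the series ∑_{n=1}^∞ Q_{p^r}(n) x^n converges to x^{p^r}/((1−x^2)(1−x^{2(p^r−1)})) − x^{p^r}/(1−x^{2 p^r}). -/
/-- `q n` is the number of partitions of `n` into odd parts. -/
def q (n : ℕ) : ℕ := (Nat.Partition.odds n).card

/-- The multinomial coefficient of a partition: if the part `i` occurs with
multiplicity `t_i`, it equals `(∑ t_i)! / ∏ (t_i)!`. -/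
def partitionMultinomial {n : ℕ} (c : n.Partition) : ℕ :=
  Nat.multinomial c.parts.toFinset fun i => Multiset.count i c.parts

/-- `Q k n` is the number of partitions of `n` into odd parts whose
multinomial coefficient equals `k`. -/
def Q (k n : ℕ) : ℕ :=
  ((Nat.Partition.odds n).filter fun c => partitionMultinomial c = k).card

open Finset

lemma le_choose_aux : ∀ (m j : ℕ), 0 < j → j < m → m ≤ m.choose j := by
  intro m
  induction m with
  | zero => intro j h1 h2; omega
  | succ m IH =>
    intro j h1 h2
    rcases Nat.lt_succ_iff_lt_or_eq.mp h2 with h | rfl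
    · obtain ⟨k, rfl⟩ : ∃ k, j = k + 1 := ⟨j - 1, by omega⟩
      rw [Nat.choose_succ_succ, Nat.succ_eq_add_one]
      have hk : 0 < m.choose k := Nat.choose_pos (by omega)
      have := IH (k + 1) h1 h
      omega
    · rw [Nat.choose_succ_self_right]

lemma lt_choose_aux (n k : ℕ) (h2 : 2 ≤ k) (hn : k + 2 ≤ n) : n < n.choose k := by
  obtain ⟨j, rfl⟩ : ∃ j, k = j + 1 := ⟨k - 1, by omega⟩
  obtain ⟨m, rfl⟩ : ∃ m, n = m + 1 := ⟨n - 1, by omega⟩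
  rw [Nat.choose_succ_succ, Nat.succ_eq_add_one]
  have h1 := le_choose_aux m j (by omega) (by omega)
  have h2 := le_choose_aux m (j + 1) (by omega) (by omega)
  omega

lemma choose_prime_pow_class {p t n k : ℕ} (hp : p.Prime) (hk : 0 < k) (hkn : k < n)
    (h : n.choose k = p ^ t) : k = 1 ∨ k + 1 = n := by
  by_contra hcon
  push_neg at hcon
  have hlt := lt_choose_aux n k (by omega) (by omega)
  have hle : p ^ t ≤ n := by
    have h2 := Nat.pow_factorization_choose_le (p := p) (n := n) (k := k) (by omega)
    rwa [h, hp.factorization_pow, Finsupp.single_eq_same] at h2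
  omega

lemma multinomial_prime_pow {p : ℕ} (hp : p.Prime) (s : Finset ℕ) :
    ∀ (f : ℕ → ℕ), (∀ i ∈ s, 0 < f i) → ∀ m, 0 < m → Nat.multinomial s f = p ^ m →
    ∃ a b, a ≠ b ∧ s = {a, b} ∧ f a = 1 ∧ f b + 1 = p ^ m := by
  induction s using Finset.strongInduction with
  | _ s IH =>
    intro f hf m hm hmul
    have hppow : 1 < p ^ m := Nat.one_lt_pow hm.ne' hp.one_lt
    rcases s.eq_empty_or_nonempty with rfl | ⟨a, ha⟩
    · simp at hmul; omega
    have has' : a ∉ s.erase a := Finset.notMem_erase a s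
    have hins : insert a (s.erase a) = s := Finset.insert_erase ha
    rw [← hins, Nat.multinomial_insert has'] at hmul
    have hdvdM : Nat.multinomial (s.erase a) f ∣ p ^ m := ⟨_, by rw [← hmul]; ring⟩
    obtain ⟨u, hum, hMu⟩ := (Nat.dvd_prime_pow hp).mp hdvdM
    rcases (s.erase a).eq_empty_or_nonempty with hs'e | ⟨b, hb⟩
    · rw [hs'e] at hmul
      simp [Nat.choose_self] at hmul
      omega
    have hba : b ≠ a := (Finset.mem_erase.mp hb).1
    have hbS : b ∈ s := Finset.mem_of_mem_erase hb
    rcases ((s.erase a).erase b).eq_empty_or_nonempty with hbe | ⟨c, hc⟩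
    · -- s.erase a = {b}
      have hsb : s.erase a = {b} := by
        apply Finset.eq_singleton_iff_unique_mem.mpr
        refine ⟨hb, fun x hx => ?_⟩
        by_contra hne
        exact absurd (Finset.mem_erase.mpr ⟨hne, hx⟩) (by simp [hbe])
      rw [hsb] at hmul
      rw [Nat.multinomial_singleton, Finset.sum_singleton, mul_one] at hmul
      have hfa : 0 < f a := hf a ha
      have hfb : 0 < f b := hf b hbS
      rcases choose_prime_pow_class hp hfa (by omega) hmul with h1 | h1
      · refine ⟨a, b, hba.symm, by rw [← hins, hsb], h1, ?_⟩
        rw [h1, Nat.choose_one_right] at hmul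
        omega
      · have hfb1 : f b = 1 := by omega
        refine ⟨b, a, hba, ?_, hfb1, ?_⟩
        · rw [← hins, hsb]; exact Finset.pair_comm a b
        · rw [hfb1] at hmul
          rw [Nat.choose_succ_self_right] at hmul
          omega
    · -- |s.erase a| ≥ 2 : contradiction
      exfalso
      have hbe' : b ∉ (s.erase a).erase b := Finset.notMem_erase b _
      have h2 : Nat.multinomial (insert b ((s.erase a).erase b)) f
          = (f b + ∑ i ∈ (s.erase a).erase b, f i).choose (f b)
            * Nat.multinomial ((s.erase a).erase b) f := Nat.multinomial_insert hbe' f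
      rw [Finset.insert_erase hb] at h2
      have hT : 0 < ∑ i ∈ (s.erase a).erase b, f i :=
        Finset.sum_pos (fun i hi => hf i (Finset.mem_of_mem_erase (Finset.mem_of_mem_erase hi)))
          ⟨c, hc⟩
      have hfb : 0 < f b := hf b hbS
      have hCge : 2 ≤ (f b + ∑ i ∈ (s.erase a).erase b, f i).choose (f b) :=
        le_trans (by omega) (le_choose_aux _ _ hfb (by omega))
      have hMpos : 0 < Nat.multinomial ((s.erase a).erase b) f := Nat.multinomial_pos _ _
      have hM2 : 2 ≤ Nat.multinomial (s.erase a) f := by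
        rw [h2]; exact le_trans hCge (Nat.le_mul_of_pos_right _ hMpos)
      have hu1 : 0 < u := by
        rcases Nat.eq_zero_or_pos u with rfl | h; · simp at hMu; omega
        · exact h
      obtain ⟨b', c', hbc', hseq', hfb', hfc'⟩ :=
        IH (s.erase a) (Finset.erase_ssubset ha) f
          (fun i hi => hf i (Finset.mem_of_mem_erase hi)) u hu1 hMu
      have hsum : ∑ i ∈ s.erase a, f i = p ^ u := by
        rw [hseq', Finset.sum_pair hbc']; omega
      rw [hMu, hsum] at hmul
      have hCdvd : (f a + p ^ u).choose (f a) ∣ p ^ m := ⟨p ^ u, hmul.symm⟩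
      obtain ⟨v, hvm, hCv⟩ := (Nat.dvd_prime_pow hp).mp hCdvd
      have hpu1 : 1 < p ^ u := Nat.one_lt_pow hu1.ne' hp.one_lt
      have hfa : 0 < f a := hf a ha
      rcases choose_prime_pow_class (n := f a + p ^ u) hp hfa (by omega) hCv with h1 | h1
      · rw [h1, Nat.choose_one_right] at hCv
        have hv1 : 0 < v := by
          rcases Nat.eq_zero_or_pos v with rfl | h; · rw [pow_zero] at hCv; omega
          · exact h
        have hd : p ∣ p ^ v - p ^ u :=
          Nat.dvd_sub (dvd_pow_self p hv1.ne') (dvd_pow_self p hu1.ne')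
        have : p ^ v - p ^ u = 1 := by omega
        rw [this] at hd
        have := Nat.le_of_dvd one_pos hd
        have := hp.one_lt
        omega
      · omega

def g1 (M : ℕ) (ab : ℕ × ℕ) : ℕ := (2 * ab.1 + 1) + (M + 1) * (2 * ab.2 + 1)
def g2 (M : ℕ) (b : ℕ) : ℕ := (M + 2) * (2 * b + 1)

def P (M n : ℕ) : Finset (ℕ × ℕ) :=
  (Finset.range (n + 1) ×ˢ Finset.range (n + 1)).filter fun ab => ab.1 ≠ ab.2 ∧ g1 M ab = n

lemma parts_spec (M a b n : ℕ) (h : g1 M (a, b) = n) :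
    ((2 * a + 1) ::ₘ Multiset.replicate (M + 1) (2 * b + 1)).sum = n := by
  rw [Multiset.sum_cons, Multiset.sum_replicate, smul_eq_mul]
  exact h

/-- The partition associated to a pair. -/
def pairPartition (M a b n : ℕ) (h : g1 M (a, b) = n) : n.Partition where
  parts := (2 * a + 1) ::ₘ Multiset.replicate (M + 1) (2 * b + 1)
  parts_pos := by
    intro i hi
    rcases Multiset.mem_cons.mp hi with h | h
    · omega
    · have := Multiset.eq_of_mem_replicate h
      omega
  parts_sum := parts_spec M a b n h

lemma count_pairPartition (M a b n z : ℕ) (h : g1 M (a, b) = n) :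
    Multiset.count z (pairPartition M a b n h).parts
      = (if z = 2 * a + 1 then 1 else 0) + (if z = 2 * b + 1 then M + 1 else 0) := by
  show Multiset.count z ((2 * a + 1) ::ₘ Multiset.replicate (M + 1) (2 * b + 1)) = _
  rw [Multiset.count_cons, Multiset.count_replicate]
  split_ifs <;> omega

lemma multinomial_pairPartition (M a b n : ℕ) (hab : a ≠ b) (h : g1 M (a, b) = n) :
    partitionMultinomial (pairPartition M a b n h) = M + 2 := by
  have huv : (2 * a + 1) ≠ (2 * b + 1) := by omega
  have htf : (pairPartition M a b n h).parts.toFinset = {2 * a + 1, 2 * b + 1} := by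
    show ((2 * a + 1) ::ₘ Multiset.replicate (M + 1) (2 * b + 1)).toFinset = _
    rw [Multiset.toFinset_cons, Multiset.toFinset_replicate]
    simp
  rw [partitionMultinomial, htf, Nat.binomial_eq_choose huv]
  rw [count_pairPartition, count_pairPartition]
  simp only [if_pos rfl, if_neg huv, if_neg (Ne.symm huv)]
  simp [Nat.choose_one_right]
  omega

lemma Q_eq_card (p r M : ℕ) (hp : p.Prime) (hr : 0 < r) (hM : 1 ≤ M)
    (hpr : p ^ r = M + 2) (n : ℕ) : Q (p ^ r) n = (P M n).card := by
  rw [Q]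
  refine (Finset.card_bij
    (fun ab hab => pairPartition M ab.1 ab.2 n ((Finset.mem_filter.mp hab).2.2))
    ?_ ?_ ?_).symm
  · -- membership
    rintro ⟨a, b⟩ hab
    obtain ⟨hmem, hne, hg⟩ := Finset.mem_filter.mp hab
    rw [Finset.mem_filter]
    constructor
    · rw [Nat.Partition.odds, Nat.Partition.restricted, Finset.mem_filter]
      refine ⟨Finset.mem_univ _, ?_⟩
      intro i hi
      have hi' : i ∈ (2 * a + 1) ::ₘ Multiset.replicate (M + 1) (2 * b + 1) := hi
      rcases Multiset.mem_cons.mp hi' with h | h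
      · subst h; simp [Nat.even_iff]
      · have := Multiset.eq_of_mem_replicate h
        subst this; simp [Nat.even_iff]
    · rw [multinomial_pairPartition M a b n hne hg, hpr]
  · -- injectivity
    rintro ⟨a1, b1⟩ h1 ⟨a2, b2⟩ h2 heq
    obtain ⟨-, hne1, -⟩ := Finset.mem_filter.mp h1
    obtain ⟨-, hne2, -⟩ := Finset.mem_filter.mp h2
    have hparts := congrArg Nat.Partition.parts heq
    have hcount : ∀ z, Multiset.count z (pairPartition M a1 b1 n _).parts
        = Multiset.count z (pairPartition M a2 b2 n _).parts := fun z => by rw [hparts]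
    have hb := hcount (2 * b1 + 1)
    have ha := hcount (2 * a1 + 1)
    rw [count_pairPartition, count_pairPartition] at hb ha
    simp only [Prod.mk.injEq]
    constructor
    · split_ifs at ha <;> omega
    · split_ifs at hb <;> omega
  · -- surjectivity
    intro c hc
    obtain ⟨hodds, hmulc⟩ := Finset.mem_filter.mp hc
    rw [Nat.Partition.odds, Nat.Partition.restricted, Finset.mem_filter] at hodds
    have hodd := hodds.2
    have hpos : ∀ i ∈ c.parts.toFinset, 0 < Multiset.count i c.parts :=
      fun i hi => Multiset.count_pos.mpr (Multiset.mem_toFinset.mp hi)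
    obtain ⟨X, Y, hXY, htf, hcX, hcY⟩ :=
      multinomial_prime_pow hp c.parts.toFinset (fun i => Multiset.count i c.parts)
        hpos r hr hmulc
    have hXmem : X ∈ c.parts := by
      rw [← Multiset.mem_toFinset, htf]; exact Finset.mem_insert_self _ _
    have hYmem : Y ∈ c.parts := by
      rw [← Multiset.mem_toFinset, htf]
      exact Finset.mem_insert_of_mem (Finset.mem_singleton_self _)
    obtain ⟨a, rfl⟩ : ∃ a, X = 2 * a + 1 := by
      have h1 := hodd X hXmem
      rw [Nat.even_iff] at h1
      exact ⟨X / 2, by omega⟩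
    obtain ⟨b, rfl⟩ : ∃ b, Y = 2 * b + 1 := by
      have h1 := hodd Y hYmem
      rw [Nat.even_iff] at h1
      exact ⟨Y / 2, by omega⟩
    have hcY' : Multiset.count (2 * b + 1) c.parts = M + 1 := by omega
    have hab : a ≠ b := by intro h; exact hXY (by omega)
    have hparts : c.parts = (2 * a + 1) ::ₘ Multiset.replicate (M + 1) (2 * b + 1) := by
      rw [Multiset.ext]
      intro z
      rw [Multiset.count_cons, Multiset.count_replicate]
      rcases eq_or_ne z (2 * a + 1) with rfl | hzX
      · rw [hcX, if_pos rfl, if_neg (by omega : ¬(2 * b + 1 = 2 * a + 1))]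
      · rcases eq_or_ne z (2 * b + 1) with rfl | hzY
        · rw [hcY', if_neg hzX, if_pos rfl]
        · rw [if_neg hzX, if_neg (Ne.symm hzY), Multiset.count_eq_zero.mpr]
          intro hmem
          have : z ∈ ({2 * a + 1, 2 * b + 1} : Finset ℕ) := by
            rw [← htf]; exact Multiset.mem_toFinset.mpr hmem
          rcases Finset.mem_insert.mp this with h | h
          · exact hzX h
          · exact hzY (Finset.mem_singleton.mp h)
    have hsum : g1 M (a, b) = n := by
      have := c.parts_sum
      rw [hparts, Multiset.sum_cons, Multiset.sum_replicate, smul_eq_mul] at this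
      exact this
    have h2an : 2 * a + 1 ≤ n := le_of_le_of_eq (Multiset.le_sum_of_mem hXmem) c.parts_sum
    have h2bn : 2 * b + 1 ≤ n := le_of_le_of_eq (Multiset.le_sum_of_mem hYmem) c.parts_sum
    refine ⟨(a, b), ?_, ?_⟩
    · rw [P, Finset.mem_filter, Finset.mem_product]
      exact ⟨⟨Finset.mem_range.mpr (by omega), Finset.mem_range.mpr (by omega)⟩, hab, hsum⟩
    · exact Nat.Partition.ext hparts.symm

lemma card_split (M n : ℕ) :
    (((Finset.range (n + 1)) ×ˢ (Finset.range (n + 1))).filter fun ab => g1 M ab = n).card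
      = (P M n).card + ((Finset.range (n + 1)).filter fun b => g2 M b = n).card := by
  classical
  have hsplit := Finset.card_filter_add_card_filter_not
    (s := ((Finset.range (n + 1)) ×ˢ (Finset.range (n + 1))).filter fun ab => g1 M ab = n)
    (p := fun ab => ab.1 = ab.2)
  have h1 : ((((Finset.range (n + 1)) ×ˢ (Finset.range (n + 1))).filter
      fun ab => g1 M ab = n).filter fun ab => ¬ ab.1 = ab.2) = P M n := by
    ext ab
    simp only [P, Finset.mem_filter]
    tauto
  have h2 : ((((Finset.range (n + 1)) ×ˢ (Finset.range (n + 1))).filter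
      fun ab => g1 M ab = n).filter fun ab => ab.1 = ab.2).card
      = ((Finset.range (n + 1)).filter fun b => g2 M b = n).card := by
    apply Finset.card_bij (fun ab _ => ab.2)
    · rintro ⟨a, b⟩ hab
      simp only [Finset.mem_filter, Finset.mem_product] at hab ⊢
      obtain ⟨⟨⟨ha, hb⟩, hg⟩, hd⟩ := hab
      subst hd
      refine ⟨hb, ?_⟩
      rw [g1] at hg
      rw [g2]
      simp only at hg ⊢
      have : (M + 2) * (2 * a + 1) = 2 * a + 1 + (M + 1) * (2 * a + 1) := by ring
      omega
    · rintro ⟨a1, b1⟩ h1 ⟨a2, b2⟩ h2 heq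
      simp only [Finset.mem_filter] at h1 h2
      have hd1 := h1.2
      have hd2 := h2.2
      simp only at hd1 hd2 heq
      simp only [Prod.mk.injEq]
      omega
    · intro b hb
      simp only [Finset.mem_filter] at hb
      refine ⟨(b, b), Finset.mem_filter.mpr ⟨Finset.mem_filter.mpr
        ⟨Finset.mem_product.mpr ⟨hb.1, hb.1⟩, ?_⟩, rfl⟩, rfl⟩
      have h := hb.2
      rw [g2] at h
      rw [g1]
      simp only
      have : (M + 2) * (2 * b + 1) = 2 * b + 1 + (M + 1) * (2 * b + 1) := by ring
      omega
  rw [h1] at hsplit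
  omega

lemma hasSum_fiber_card {ι : Type*} (g : ι → ℕ) (F : ℕ → Finset ι)
    (hF : ∀ n i, i ∈ F n ↔ g i = n) (x : ℝ) (S : ℝ)
    (h : HasSum (fun i => x ^ g i) S) :
    HasSum (fun n => ((F n).card : ℝ) * x ^ n) S := by
  haveI inst : ∀ n, Fintype {i // g i = n} := fun n => Fintype.subtype (F n) (hF n)
  have h1 : HasSum (fun y : Σ n : ℕ, {i // g i = n} => x ^ g y.2.1) S :=
    ((Equiv.sigmaFiberEquiv g).hasSum_iff (f := fun i => x ^ g i) (a := S)).mpr h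
  refine HasSum.sigma h1 ?_
  intro n
  have h2 := hasSum_fintype (fun i : {i // g i = n} => x ^ g i.1)
  have h3 : (∑ i : {i // g i = n}, x ^ g i.1) = ((F n).card : ℝ) * x ^ n := by
    have hconst : ∀ i : {i // g i = n}, x ^ g i.1 = x ^ n := fun i => by rw [i.2]
    calc (∑ i : {i // g i = n}, x ^ g i.1) = ∑ _i : {i // g i = n}, x ^ n :=
          Finset.sum_congr rfl (fun i _ => hconst i)
      _ = ((F n).card : ℝ) * x ^ n := by
          rw [Finset.sum_const, Finset.card_univ, Fintype.card_of_subtype (F n) (hF n),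
            nsmul_eq_mul]
  rwa [h3] at h2

theorem Q_prime_pow_genFun (p r : ℕ) (hp : p.Prime) (hr : 0 < r) (hpr : 2 < p ^ r)
    (x : ℝ) (hx : |x| < 1) :
    HasSum (fun n : ℕ => (Q (p ^ r) (n + 1) : ℝ) * x ^ (n + 1))
      (x ^ (p ^ r) / ((1 - x ^ 2) * (1 - x ^ (2 * (p ^ r - 1)))) -
        x ^ (p ^ r) / (1 - x ^ (2 * p ^ r))) := by
  obtain ⟨M, hpr2, hM⟩ : ∃ M, p ^ r = M + 2 ∧ 1 ≤ M := ⟨p ^ r - 2, by omega, by omega⟩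
  have h0 : (0:ℝ) ≤ x ^ 2 := sq_nonneg x
  have hx2 : x ^ 2 < 1 := by
    rw [← sq_abs]
    exact pow_lt_one₀ (abs_nonneg x) hx two_ne_zero
  have h0B : (0:ℝ) ≤ (x ^ 2) ^ (M + 1) := pow_nonneg h0 _
  have hx2B : (x ^ 2) ^ (M + 1) < 1 := pow_lt_one₀ h0 hx2 (Nat.succ_ne_zero M)
  have h0C : (0:ℝ) ≤ (x ^ 2) ^ (M + 2) := pow_nonneg h0 _
  have hx2C : (x ^ 2) ^ (M + 2) < 1 := pow_lt_one₀ h0 hx2 (Nat.succ_ne_zero _)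
  have hA : HasSum (fun a : ℕ => (x ^ 2) ^ a) (1 - x ^ 2)⁻¹ :=
    hasSum_geometric_of_lt_one h0 hx2
  have hB : HasSum (fun b : ℕ => ((x ^ 2) ^ (M + 1)) ^ b) (1 - (x ^ 2) ^ (M + 1))⁻¹ :=
    hasSum_geometric_of_lt_one h0B hx2B
  have hC : HasSum (fun b : ℕ => ((x ^ 2) ^ (M + 2)) ^ b) (1 - (x ^ 2) ^ (M + 2))⁻¹ :=
    hasSum_geometric_of_lt_one h0C hx2C
  have hsummable : Summable (fun ab : ℕ × ℕ => (x ^ 2) ^ ab.1 * ((x ^ 2) ^ (M + 1)) ^ ab.2) :=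
    Summable.mul_of_nonneg hA.summable hB.summable
      (fun a => pow_nonneg h0 a) (fun b => pow_nonneg h0B b)
  have hAB := (hA.mul hB hsummable).mul_left (x ^ (M + 2))
  have hCx := hC.mul_left (x ^ (M + 2))
  have hg1 : HasSum (fun ab : ℕ × ℕ => x ^ g1 M ab)
      (x ^ (M + 2) * ((1 - x ^ 2)⁻¹ * (1 - (x ^ 2) ^ (M + 1))⁻¹)) := by
    have he : (fun ab : ℕ × ℕ => x ^ (M + 2) * ((x ^ 2) ^ ab.1 * ((x ^ 2) ^ (M + 1)) ^ ab.2))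
        = fun ab : ℕ × ℕ => x ^ g1 M ab := by
      funext ab
      rw [← pow_mul, ← pow_mul, ← pow_mul, ← pow_add, ← pow_add]
      congr 1
      simp only [g1]
      ring
    rw [← he]
    exact hAB
  have hg2 : HasSum (fun b : ℕ => x ^ g2 M b)
      (x ^ (M + 2) * (1 - (x ^ 2) ^ (M + 2))⁻¹) := by
    have he : (fun b : ℕ => x ^ (M + 2) * ((x ^ 2) ^ (M + 2)) ^ b)
        = fun b : ℕ => x ^ g2 M b := by
      funext b
      rw [← pow_mul, ← pow_mul, ← pow_add]
      congr 1
      simp only [g2]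
      ring
    rw [← he]
    exact hCx
  have hF1 : ∀ n (ab : ℕ × ℕ),
      ab ∈ ((Finset.range (n + 1)) ×ˢ (Finset.range (n + 1))).filter
        (fun ab => g1 M ab = n) ↔ g1 M ab = n := by
    intro n ab
    simp only [Finset.mem_filter, Finset.mem_product, Finset.mem_range]
    constructor
    · exact And.right
    · intro h
      refine ⟨⟨?_, ?_⟩, h⟩ <;>
      · rw [g1] at h
        have := Nat.le_mul_of_pos_left (2 * ab.2 + 1) (show 0 < M + 1 by omega)
        omega
  have hF2 : ∀ n (b : ℕ),
      b ∈ (Finset.range (n + 1)).filter (fun b => g2 M b = n) ↔ g2 M b = n := by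
    intro n b
    simp only [Finset.mem_filter, Finset.mem_range]
    constructor
    · exact And.right
    · intro h
      refine ⟨?_, h⟩
      rw [g2] at h
      have := Nat.le_mul_of_pos_left (2 * b + 1) (show 0 < M + 2 by omega)
      omega
  have hc1 := hasSum_fiber_card (g1 M) _ hF1 x _ hg1
  have hc2 := hasSum_fiber_card (g2 M) _ hF2 x _ hg2
  have hsub := hc1.sub hc2
  have hQn : ∀ n : ℕ, ((Q (p ^ r) n : ℝ)) * x ^ n
      = ((((Finset.range (n + 1)) ×ˢ (Finset.range (n + 1))).filter
          (fun ab => g1 M ab = n)).card : ℝ) * x ^ n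
        - (((Finset.range (n + 1)).filter (fun b => g2 M b = n)).card : ℝ) * x ^ n := by
    intro n
    rw [Q_eq_card p r M hp hr hM hpr2 n, card_split M n]
    push_cast
    ring
  have hQ : HasSum (fun n : ℕ => (Q (p ^ r) n : ℝ) * x ^ n)
      (x ^ (M + 2) * ((1 - x ^ 2)⁻¹ * (1 - (x ^ 2) ^ (M + 1))⁻¹)
        - x ^ (M + 2) * (1 - (x ^ 2) ^ (M + 2))⁻¹) := by
    rw [show (fun n : ℕ => (Q (p ^ r) n : ℝ) * x ^ n) = _ from funext hQn]
    exact hsub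
  have hQ0 : Q (p ^ r) 0 = 0 := by
    rw [Q_eq_card p r M hp hr hM hpr2 0, Finset.card_eq_zero,
      Finset.eq_empty_iff_forall_notMem]
    rintro ⟨a, b⟩ hab
    obtain ⟨-, -, hg⟩ := Finset.mem_filter.mp hab
    rw [g1] at hg
    omega
  refine (hasSum_nat_add_iff (f := fun n : ℕ => (Q (p ^ r) n : ℝ) * x ^ n) 1).mpr ?_
  rw [Finset.range_one, Finset.sum_singleton, hQ0]
  norm_num
  convert hQ using 1
  · rfl
  have hne1 : (1:ℝ) - x ^ 2 ≠ 0 := ne_of_gt (by linarith)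
  have hne2 : (1:ℝ) - (x ^ 2) ^ (M + 1) ≠ 0 := ne_of_gt (by linarith)
  have hne3 : (1:ℝ) - (x ^ 2) ^ (M + 2) ≠ 0 := ne_of_gt (by linarith)
  rw [hpr2]
  have e1 : M + 2 - 1 = M + 1 := by omega
  rw [e1, pow_mul x 2 (M + 1), pow_mul x 2 (M + 2)]
  rw [div_eq_mul_inv, div_eq_mul_inv, mul_inv]
end

section
/- For every positive integer n, q(n) − q(n−1) − q(n−2) ≤ 0, where q(m) = 0 for negative integers m and q(0) = 1. -/
open Multiset Nat Nat.Partition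

/-- minimal part of a partition -/
noncomputable def minPart {n : ℕ} (p : n.Partition) : ℕ := sInf {a | a ∈ p.parts}

lemma minPart_mem {n : ℕ} (p : n.Partition) (h : p.parts ≠ 0) : minPart p ∈ p.parts := by
  have : {a | a ∈ p.parts}.Nonempty := by
    obtain ⟨a, ha⟩ := Multiset.exists_mem_of_ne_zero h
    exact ⟨a, ha⟩
  exact Nat.sInf_mem this

lemma minPart_le {n : ℕ} (p : n.Partition) {a : ℕ} (ha : a ∈ p.parts) : minPart p ≤ a :=
  Nat.sInf_le ha

/-- remove a part `1` -/
noncomputable def g (n : ℕ) (p : n.Partition) : (n-1).Partition :=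
  if h : 1 ∈ p.parts then
    ⟨p.parts.erase 1,
     fun hi => p.parts_pos (Multiset.mem_of_mem_erase hi),
     by
       have h1 : (1 ::ₘ p.parts.erase 1).sum = n := by rw [Multiset.cons_erase h, p.parts_sum]
       rw [Multiset.sum_cons] at h1
       omega⟩
  else default

/-- reduce the minimal part by 2 -/
noncomputable def f (n : ℕ) (p : n.Partition) : (n-2).Partition :=
  if h : 1 ∉ p.parts ∧ p.parts ≠ 0 ∧ (∀ i ∈ p.parts, ¬ Even i) then
    have hmem : minPart p ∈ p.parts := minPart_mem p h.2.1
    have h3 : 3 ≤ minPart p := by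
      have h0 : 0 < minPart p := p.parts_pos hmem
      have h1 : minPart p ≠ 1 := fun he => h.1 (he ▸ hmem)
      have h2 : ¬ Even (minPart p) := h.2.2 _ hmem
      rcases Nat.even_or_odd (minPart p) with he | ho
      · exact absurd he h2
      · obtain ⟨k, hk⟩ := ho; omega
    ⟨(minPart p - 2) ::ₘ p.parts.erase (minPart p),
     by
       intro i hi
       rcases Multiset.mem_cons.1 hi with rfl | hi'
       · omega
       · exact p.parts_pos (Multiset.mem_of_mem_erase hi')
     , by
       have h1 : (minPart p ::ₘ p.parts.erase (minPart p)).sum = n := by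
         rw [Multiset.cons_erase hmem, p.parts_sum]
       rw [Multiset.sum_cons] at h1
       rw [Multiset.sum_cons]
       have hle : minPart p ≤ n := by omega
       omega⟩
  else default

lemma key (n : ℕ) (hn : 2 ≤ n) :
    (odds n).card ≤ (odds (n-1)).card + (odds (n-2)).card := by
  classical
  rw [← Finset.card_filter_add_card_filter_not (p := fun p => 1 ∈ p.parts)
    (s := odds n)]
  have hodds : ∀ {m : ℕ} (p : m.Partition), p ∈ odds m ↔ ∀ i ∈ p.parts, ¬ Even i := by
    intro m p
    simp [odds, restricted]
  apply Nat.add_le_add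
  · apply Finset.card_le_card_of_injOn (g n)
    · intro p hp
      simp only [Finset.mem_filter, Finset.mem_coe] at hp ⊢
      obtain ⟨hpo, hp1⟩ := hp
      rw [hodds]
      rw [g, dif_pos hp1]
      intro i hi
      exact (hodds p).1 hpo i (Multiset.mem_of_mem_erase hi)
    · intro p hp q hq hpq
      simp only [Finset.coe_filter, Set.mem_setOf_eq] at hp hq
      rw [g, dif_pos hp.2, g, dif_pos hq.2] at hpq
      have := congrArg Nat.Partition.parts hpq
      simp only at this
      ext1
      calc p.parts = 1 ::ₘ p.parts.erase 1 := (Multiset.cons_erase hp.2).symm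
        _ = 1 ::ₘ q.parts.erase 1 := by rw [this]
        _ = q.parts := Multiset.cons_erase hq.2
  · apply Finset.card_le_card_of_injOn (f n)
    · intro p hp
      simp only [Finset.mem_filter, Finset.mem_coe] at hp ⊢
      obtain ⟨hpo, hp1⟩ := hp
      have hodd := (hodds p).1 hpo
      have hne : p.parts ≠ 0 := by
        intro h0
        have hs := p.parts_sum
        rw [h0, Multiset.sum_zero] at hs
        omega
      have hcond : 1 ∉ p.parts ∧ p.parts ≠ 0 ∧ (∀ i ∈ p.parts, ¬ Even i) := ⟨hp1, hne, hodd⟩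
      rw [hodds]
      rw [f, dif_pos hcond]
      have hmem : minPart p ∈ p.parts := minPart_mem p hne
      have h3 : 3 ≤ minPart p := by
        have h0 : 0 < minPart p := p.parts_pos hmem
        have hne1 : minPart p ≠ 1 := fun he => hp1 (he ▸ hmem)
        have h2 : ¬ Even (minPart p) := hodd _ hmem
        rcases Nat.even_or_odd (minPart p) with he | ho
        · exact absurd he h2
        · obtain ⟨k, hk⟩ := ho; omega
      intro i hi
      rcases Multiset.mem_cons.1 hi with rfl | hi'
      · intro he
        apply hodd _ hmem
        have : minPart p = (minPart p - 2) + 2 := by omega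
        rw [this]
        exact he.add (by norm_num)
      · exact hodd _ (Multiset.mem_of_mem_erase hi')
    · intro p hp q hq hpq
      simp only [Finset.coe_filter, Set.mem_setOf_eq] at hp hq
      have hpodd := (hodds p).1 hp.1
      have hqodd := (hodds q).1 hq.1
      have hpne : p.parts ≠ 0 := by
        intro h0; have hs := p.parts_sum; rw [h0, Multiset.sum_zero] at hs; omega
      have hqne : q.parts ≠ 0 := by
        intro h0; have hs := q.parts_sum; rw [h0, Multiset.sum_zero] at hs; omega
      have hpc : 1 ∉ p.parts ∧ p.parts ≠ 0 ∧ (∀ i ∈ p.parts, ¬ Even i) := ⟨hp.2, hpne, hpodd⟩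
      have hqc : 1 ∉ q.parts ∧ q.parts ≠ 0 ∧ (∀ i ∈ q.parts, ¬ Even i) := ⟨hq.2, hqne, hqodd⟩
      rw [f, dif_pos hpc, f, dif_pos hqc] at hpq
      have heq := congrArg Nat.Partition.parts hpq
      simp only at heq
      have hpmem : minPart p ∈ p.parts := minPart_mem p hpne
      have hqmem : minPart q ∈ q.parts := minPart_mem q hqne
      have hp3 : 3 ≤ minPart p := by
        have h0 : 0 < minPart p := p.parts_pos hpmem
        have hne1 : minPart p ≠ 1 := fun he => hp.2 (he ▸ hpmem)
        have h2 : ¬ Even (minPart p) := hpodd _ hpmem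
        rcases Nat.even_or_odd (minPart p) with he | ho
        · exact absurd he h2
        · obtain ⟨k, hk⟩ := ho; omega
      have hq3 : 3 ≤ minPart q := by
        have h0 : 0 < minPart q := q.parts_pos hqmem
        have hne1 : minPart q ≠ 1 := fun he => hq.2 (he ▸ hqmem)
        have h2 : ¬ Even (minPart q) := hqodd _ hqmem
        rcases Nat.even_or_odd (minPart q) with he | ho
        · exact absurd he h2
        · obtain ⟨k, hk⟩ := ho; omega
      -- show minPart p = minPart q
      have hmm : minPart p = minPart q := by
        have h1 : minPart q - 2 ∈ (minPart p - 2) ::ₘ p.parts.erase (minPart p) := by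
          rw [heq]; exact Multiset.mem_cons_self _ _
        have h2 : minPart p - 2 ∈ (minPart q - 2) ::ₘ q.parts.erase (minPart q) := by
          rw [← heq]; exact Multiset.mem_cons_self _ _
        rcases Multiset.mem_cons.1 h1 with he1 | hi1
        · omega
        · have hle1 : minPart p ≤ minPart q - 2 :=
            minPart_le p (Multiset.mem_of_mem_erase hi1)
          rcases Multiset.mem_cons.1 h2 with he2 | hi2
          · omega
          · have hle2 : minPart q ≤ minPart p - 2 :=
              minPart_le q (Multiset.mem_of_mem_erase hi2)
            omega
      rw [hmm] at heq
      have herase : p.parts.erase (minPart q) = q.parts.erase (minPart q) :=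
        (Multiset.cons_inj_right _).1 heq
      ext1
      rw [hmm] at hpmem
      calc p.parts = minPart q ::ₘ p.parts.erase (minPart q) :=
            (Multiset.cons_erase hpmem).symm
        _ = minPart q ::ₘ q.parts.erase (minPart q) := by rw [herase]
        _ = q.parts := Multiset.cons_erase hqmem

/-- `q' m` is the number of partitions of `m` into odd parts, extended by
`q' m = 0` for `m < 0` (and `q' 0 = 1`). -/
def q' (m : ℤ) : ℕ := if 0 ≤ m then (Nat.Partition.odds m.toNat).card else 0

theorem q_sub_q_sub_q_nonpos (n : ℤ) (hn : 0 < n) :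
    (q' n : ℤ) - (q' (n - 1) : ℤ) - (q' (n - 2) : ℤ) ≤ 0 := by
  rcases eq_or_lt_of_le (by omega : (1:ℤ) ≤ n) with h1 | h2
  · -- n = 1
    have hn1 : n = 1 := h1.symm
    subst hn1
    have hq1 : q' 1 = (odds 1).card := by simp [q']
    have hq0 : q' 0 = (odds 0).card := by simp [q']
    have hqm : q' (-1) = 0 := by simp [q']
    rw [show (1:ℤ) - 1 = 0 by ring, show (1:ℤ) - 2 = -1 by ring, hq1, hq0, hqm]
    have hcard1 : (odds 1).card ≤ 1 := by
      have h := Finset.card_le_univ (odds 1)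
      simpa using h
    have hcard0 : 1 ≤ (odds 0).card := by
      have hmem : (default : Nat.Partition 0) ∈ odds 0 := by simp [odds, restricted]
      exact Finset.card_pos.2 ⟨_, hmem⟩
    push_cast
    omega
  · -- n ≥ 2
    have h2' : 2 ≤ n := h2
    have e1 : (n - 1).toNat = n.toNat - 1 := by omega
    have e2 : (n - 2).toNat = n.toNat - 2 := by omega
    have hk := key n.toNat (by omega)
    have hq : q' n = (odds n.toNat).card := by rw [q', if_pos (by omega : (0:ℤ) ≤ n)]
    have hq1 : q' (n - 1) = (odds (n.toNat - 1)).card := by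
      rw [q', if_pos (by omega : (0:ℤ) ≤ n - 1), e1]
    have hq2 : q' (n - 2) = (odds (n.toNat - 2)).card := by
      rw [q', if_pos (by omega : (0:ℤ) ≤ n - 2), e2]
    rw [hq, hq1, hq2]
    omega
end

section
/- Let k and n be nonnegative integers with n > 2k. Then ∑_{j=0}^{k} C(k,j) · q(n−k−j) ≤ F_n, where C(k,j) is the binomial coefficient. -/
namespace QAux

def Q (n : ℕ) : ℕ := (Nat.Partition.odds n).card

lemma mem_odds {n : ℕ} {p : Nat.Partition n} :
    p ∈ Nat.Partition.odds n ↔ ∀ i ∈ p.parts, ¬ Even i := by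
  simp [Nat.Partition.odds, Nat.Partition.restricted]

/-- Replace one occurrence of part `a` by `b`. -/
def replace {N : ℕ} (c : Nat.Partition N) (a b M : ℕ) (ha : a ∈ c.parts) (hb : 0 < b)
    (hM : b + (N - a) = M) : Nat.Partition M where
  parts := b ::ₘ c.parts.erase a
  parts_pos := by
    intro i hi
    rcases Multiset.mem_cons.1 hi with rfl | hi
    · exact hb
    · exact c.parts_pos (Multiset.mem_of_mem_erase hi)
  parts_sum := by
    have h2 := congrArg Multiset.sum (Multiset.cons_erase ha)
    rw [Multiset.sum_cons, c.parts_sum] at h2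
    rw [Multiset.sum_cons]
    omega

@[simp] lemma replace_parts {N : ℕ} (c : Nat.Partition N) (a b M : ℕ) (ha : a ∈ c.parts)
    (hb : 0 < b) (hM : b + (N - a) = M) :
    (replace c a b M ha hb hM).parts = b ::ₘ c.parts.erase a := rfl

/-- Remove one occurrence of part `1`. -/
def eraseOne {N : ℕ} (c : Nat.Partition (N + 1)) (h : 1 ∈ c.parts) : Nat.Partition N where
  parts := c.parts.erase 1
  parts_pos := fun hi => c.parts_pos (Multiset.mem_of_mem_erase hi)
  parts_sum := by
    have h2 := congrArg Multiset.sum (Multiset.cons_erase h)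
    rw [Multiset.sum_cons, c.parts_sum] at h2
    omega

lemma cardA (n : ℕ) :
    ((Nat.Partition.odds (n + 2)).filter (fun c => 1 ∈ c.parts)).card ≤ Q (n + 1) := by
  classical
  apply Finset.card_le_card_of_injOn
    (fun c => if h : 1 ∈ c.parts then eraseOne c h else default)
  · intro c hc
    rw [Finset.mem_coe, Finset.mem_filter] at hc
    obtain ⟨hodds, h1⟩ := hc
    rw [mem_odds] at hodds
    simp only [h1, dif_pos]
    rw [Finset.mem_coe, mem_odds]
    intro i hi
    exact hodds i (Multiset.mem_of_mem_erase hi)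
  · intro c hc d hd he
    rw [Finset.mem_coe, Finset.mem_filter] at hc hd
    obtain ⟨-, hc1⟩ := hc
    obtain ⟨-, hd1⟩ := hd
    simp only [hc1, hd1, dif_pos] at he
    have hparts : c.parts.erase 1 = d.parts.erase 1 := congrArg Nat.Partition.parts he
    apply Nat.Partition.ext
    rw [← Multiset.cons_erase hc1, ← Multiset.cons_erase hd1, hparts]

/-- The map used to bound partitions with odd parts, none equal to 1. -/
noncomputable def gB (n : ℕ) (c : Nat.Partition (n + 2)) : Nat.Partition n :=
  if h3 : 3 ∈ c.parts then
    replace c 3 1 n h3 one_pos (by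
      have h := Multiset.le_sum_of_mem h3
      rw [c.parts_sum] at h
      omega)
  else if h : c.parts ≠ 0 ∧ ∀ i ∈ c.parts, 5 ≤ i then
    replace c (c.parts.toFinset.min' (Multiset.toFinset_nonempty.mpr h.1))
      (c.parts.toFinset.min' (Multiset.toFinset_nonempty.mpr h.1) - 2) n
      (Multiset.mem_toFinset.1 (Finset.min'_mem _ (Multiset.toFinset_nonempty.mpr h.1)))
      (by
        have hm := Multiset.mem_toFinset.1
          (Finset.min'_mem _ (Multiset.toFinset_nonempty.mpr h.1))
        have := h.2 _ hm
        omega)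
      (by
        have hm := Multiset.mem_toFinset.1
          (Finset.min'_mem _ (Multiset.toFinset_nonempty.mpr h.1))
        have h5 := h.2 _ hm
        have hle := Multiset.le_sum_of_mem hm
        rw [c.parts_sum] at hle
        omega)
  else default

lemma cardB (n : ℕ) :
    ((Nat.Partition.odds (n + 2)).filter (fun c => 1 ∉ c.parts)).card ≤ Q n := by
  classical
  -- facts about elements of the filtered set
  have key : ∀ c : Nat.Partition (n + 2),
      c ∈ (Nat.Partition.odds (n + 2)).filter (fun c => 1 ∉ c.parts) →
      3 ∉ c.parts → c.parts ≠ 0 ∧ ∀ i ∈ c.parts, 5 ≤ i := by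
    intro c hc h3
    rw [Finset.mem_filter, mem_odds] at hc
    obtain ⟨hodd, h1⟩ := hc
    constructor
    · intro h0
      have := c.parts_sum
      rw [h0] at this
      simp at this
    · intro i hi
      have hpos := c.parts_pos hi
      have hoddi : i % 2 = 1 := Nat.odd_iff.1 (Nat.not_even_iff_odd.1 (hodd i hi))
      have hne1 : i ≠ 1 := fun e => h1 (e ▸ hi)
      have hne3 : i ≠ 3 := fun e => h3 (e ▸ hi)
      omega
  apply Finset.card_le_card_of_injOn (gB n)
  · intro c hc
    have hc' := hc
    rw [Finset.mem_coe, Finset.mem_filter, mem_odds] at hc'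
    obtain ⟨hodd, h1⟩ := hc'
    by_cases h3 : 3 ∈ c.parts
    · rw [Finset.mem_coe, mem_odds]
      simp only [gB, dif_pos h3, replace_parts]
      intro i hi
      rcases Multiset.mem_cons.1 hi with rfl | hi
      · simp
      · exact hodd i (Multiset.mem_of_mem_erase hi)
    · have h := key c hc h3
      rw [Finset.mem_coe, mem_odds]
      simp only [gB, dif_neg h3, dif_pos h, replace_parts]
      intro i hi
      have hm := Multiset.mem_toFinset.1
        (Finset.min'_mem c.parts.toFinset (Multiset.toFinset_nonempty.mpr h.1))
      rcases Multiset.mem_cons.1 hi with rfl | hi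
      · have h5 := h.2 _ hm
        have : c.parts.toFinset.min' _ % 2 = 1 :=
          Nat.odd_iff.1 (Nat.not_even_iff_odd.1 (hodd _ hm))
        rw [Nat.not_even_iff]
        omega
      · exact hodd i (Multiset.mem_of_mem_erase hi)
  · intro c hc d hd he
    rw [Finset.mem_coe] at hc hd
    have hc' := hc; have hd' := hd
    rw [Finset.mem_filter, mem_odds] at hc' hd'
    obtain ⟨hcodd, hc1⟩ := hc'
    obtain ⟨hdodd, hd1⟩ := hd'
    by_cases hc3 : 3 ∈ c.parts <;> by_cases hd3 : 3 ∈ d.parts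
    · -- both 3-branch
      simp only [gB, dif_pos hc3, dif_pos hd3] at he
      have hparts : (1 : ℕ) ::ₘ c.parts.erase 3 = 1 ::ₘ d.parts.erase 3 :=
        congrArg Nat.Partition.parts he
      rw [Multiset.cons_inj_right] at hparts
      apply Nat.Partition.ext
      rw [← Multiset.cons_erase hc3, ← Multiset.cons_erase hd3, hparts]
    · -- c 3-branch, d min-branch: contradiction via presence of 1
      have hKd := key d hd hd3
      simp only [gB, dif_pos hc3, dif_neg hd3, dif_pos hKd] at he
      have hparts := congrArg Nat.Partition.parts he
      simp only [replace_parts] at hparts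
      exfalso
      have h1mem : (1 : ℕ) ∈
          (d.parts.toFinset.min' (Multiset.toFinset_nonempty.mpr hKd.1) - 2) ::ₘ
            d.parts.erase (d.parts.toFinset.min' (Multiset.toFinset_nonempty.mpr hKd.1)) := by
        rw [← hparts]; exact Multiset.mem_cons_self _ _
      have hm := Multiset.mem_toFinset.1
        (Finset.min'_mem d.parts.toFinset (Multiset.toFinset_nonempty.mpr hKd.1))
      have h5 := hKd.2 _ hm
      rcases Multiset.mem_cons.1 h1mem with h | h
      · omega
      · exact hd1 (Multiset.mem_of_mem_erase h)
    · -- symmetric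
      have hKc := key c hc hc3
      simp only [gB, dif_pos hd3, dif_neg hc3, dif_pos hKc] at he
      have hparts := congrArg Nat.Partition.parts he
      simp only [replace_parts] at hparts
      exfalso
      have h1mem : (1 : ℕ) ∈
          (c.parts.toFinset.min' (Multiset.toFinset_nonempty.mpr hKc.1) - 2) ::ₘ
            c.parts.erase (c.parts.toFinset.min' (Multiset.toFinset_nonempty.mpr hKc.1)) := by
        rw [hparts]; exact Multiset.mem_cons_self _ _
      have hm := Multiset.mem_toFinset.1
        (Finset.min'_mem c.parts.toFinset (Multiset.toFinset_nonempty.mpr hKc.1))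
      have h5 := hKc.2 _ hm
      rcases Multiset.mem_cons.1 h1mem with h | h
      · omega
      · exact hc1 (Multiset.mem_of_mem_erase h)
    · -- both min-branch
      have hKc := key c hc hc3
      have hKd := key d hd hd3
      simp only [gB, dif_neg hc3, dif_pos hKc, dif_neg hd3, dif_pos hKd] at he
      have hparts := congrArg Nat.Partition.parts he
      simp only [replace_parts] at hparts
      set mc := c.parts.toFinset.min' (Multiset.toFinset_nonempty.mpr hKc.1) with hmc
      set md := d.parts.toFinset.min' (Multiset.toFinset_nonempty.mpr hKd.1) with hmd
      have hmcm : mc ∈ c.parts := Multiset.mem_toFinset.1 (Finset.min'_mem _ _)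
      have hmdm : md ∈ d.parts := Multiset.mem_toFinset.1 (Finset.min'_mem _ _)
      have hc5 := hKc.2 _ hmcm
      have hd5 := hKd.2 _ hmdm
      have hmceq : mc = md := by
        have h1 : mc - 2 ∈ (md - 2) ::ₘ d.parts.erase md := by
          rw [← hparts]; exact Multiset.mem_cons_self _ _
        have h2 : md - 2 ∈ (mc - 2) ::ₘ c.parts.erase mc := by
          rw [hparts]; exact Multiset.mem_cons_self _ _
        rcases Multiset.mem_cons.1 h1 with h | h
        · omega
        · have hd_le : md ≤ mc - 2 :=
            Finset.min'_le _ _ (Multiset.mem_toFinset.2 (Multiset.mem_of_mem_erase h))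
          rcases Multiset.mem_cons.1 h2 with h' | h'
          · omega
          · have hc_le : mc ≤ md - 2 :=
              Finset.min'_le _ _ (Multiset.mem_toFinset.2 (Multiset.mem_of_mem_erase h'))
            omega
      rw [hmceq] at hparts
      rw [Multiset.cons_inj_right] at hparts
      apply Nat.Partition.ext
      rw [← Multiset.cons_erase hmcm, ← Multiset.cons_erase hmdm, hmceq, hparts]

lemma Q_add_two_le (n : ℕ) : Q (n + 2) ≤ Q (n + 1) + Q n := by
  classical
  have hsplit := Finset.card_filter_add_card_filter_not
    (s := Nat.Partition.odds (n + 2)) (p := fun c => 1 ∈ c.parts)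
  have h1 := cardA n
  have h2 := cardB n
  unfold Q at *
  omega

lemma Q_one : Q 1 ≤ 1 := by
  have := Finset.card_le_univ (Nat.Partition.odds 1)
  simpa [Q] using this

lemma Q_two : Q 2 ≤ 1 := by
  apply Finset.card_le_one.2
  intro p hp q hq
  have hkey : ∀ r : Nat.Partition 2, r ∈ Nat.Partition.odds 2 →
      r.parts = Multiset.replicate 2 1 := by
    intro r hr
    rw [mem_odds] at hr
    have hall : ∀ b ∈ r.parts, b = 1 := by
      intro b hb
      have hpos := r.parts_pos hb
      have hle := Multiset.le_sum_of_mem hb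
      rw [r.parts_sum] at hle
      have : b % 2 = 1 := Nat.odd_iff.1 (Nat.not_even_iff_odd.1 (hr b hb))
      omega
    have hrep := Multiset.eq_replicate_of_mem hall
    have hcard : Multiset.card r.parts = 2 := by
      have := r.parts_sum
      rw [hrep] at this
      simpa using this
    rw [hrep, hcard]
  exact Nat.Partition.ext ((hkey p hp).trans (hkey q hq).symm)

lemma Q_le_fib : ∀ n, Q (n + 1) ≤ Nat.fib (n + 1)
  | 0 => by simpa using Q_one
  | 1 => by simpa [Nat.fib] using Q_two
  | (m + 2) => by
      have h1 := Q_le_fib (m + 1)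
      have h2 := Q_le_fib m
      have h3 := Q_add_two_le (m + 1)
      rw [show m + 2 + 1 = (m + 1) + 2 by ring, Nat.fib_add_two]
      omega

lemma q'_natCast (m : ℕ) : q' (m : ℤ) = Q m := by
  simp [q', Q]

lemma pascal_sum (f : ℕ → ℕ) (k : ℕ) :
    ∑ j ∈ Finset.range (k + 2), (k + 1).choose j * f j
      = ∑ j ∈ Finset.range (k + 1), k.choose j * f (j + 1)
        + ∑ j ∈ Finset.range (k + 1), k.choose j * f j := by
  rw [show k + 2 = (k + 1) + 1 from rfl, Finset.sum_range_succ']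
  have e3 : ∀ j ∈ Finset.range (k + 1), (k + 1).choose (j + 1) * f (j + 1)
      = k.choose j * f (j + 1) + k.choose (j + 1) * f (j + 1) := by
    intro j _
    rw [Nat.choose_succ_succ, add_mul]
  rw [Finset.sum_congr rfl e3, Finset.sum_add_distrib, add_assoc]
  congr 1
  have e1 := Finset.sum_range_succ' (fun j => k.choose j * f j) (k + 1)
  have e2 := Finset.sum_range_succ (fun j => k.choose j * f j) (k + 1)
  simp only [Nat.choose_succ_self, zero_mul, add_zero] at e2
  rw [show (k + 1).choose 0 * f 0 = k.choose 0 * f 0 by rw [Nat.choose_zero_right, Nat.choose_zero_right], ← e1, e2]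

end QAux

set_option maxHeartbeats 1000000 in
theorem sum_choose_q_le_fib (k n : ℕ) (h : 2 * k < n) :
    ∑ j ∈ Finset.range (k + 1), k.choose j * q' ((n : ℤ) - k - j) ≤ Nat.fib n := by
  induction k generalizing n with
  | zero =>
    obtain ⟨m, rfl⟩ : ∃ m, n = m + 1 := ⟨n - 1, by omega⟩
    have hq := QAux.q'_natCast (m + 1)
    push_cast at hq
    simpa [hq] using QAux.Q_le_fib m
  | succ k ih =>
    have hn : 2 * k + 3 ≤ n := by omega
    have hc2 : ∀ j : ℕ, q' ((n : ℤ) - (↑(k + 1) : ℤ) - ↑(j + 1))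
        = q' (((n - 2 : ℕ) : ℤ) - ↑k - ↑j) := by
      intro j
      congr 1
      have h2 : ((n - 2 : ℕ) : ℤ) = (n : ℤ) - 2 := by omega
      rw [h2]
      push_cast
      ring
    have hc1 : ∀ j : ℕ, q' ((n : ℤ) - (↑(k + 1) : ℤ) - ↑j)
        = q' (((n - 1 : ℕ) : ℤ) - ↑k - ↑j) := by
      intro j
      congr 1
      have h1 : ((n - 1 : ℕ) : ℤ) = (n : ℤ) - 1 := by omega
      rw [h1]
      push_cast
      ring
    have hfib : Nat.fib (n - 2) + Nat.fib (n - 1) = Nat.fib n := by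
      have h := Nat.fib_add_two (n := n - 2)
      rw [show n - 2 + 2 = n by omega, show n - 2 + 1 = n - 1 by omega] at h
      omega
    calc ∑ j ∈ Finset.range (k + 1 + 1), (k + 1).choose j * q' ((n : ℤ) - ↑(k + 1) - ↑j)
        = ∑ j ∈ Finset.range (k + 1), k.choose j * q' ((n : ℤ) - ↑(k + 1) - ↑(j + 1))
          + ∑ j ∈ Finset.range (k + 1), k.choose j * q' ((n : ℤ) - ↑(k + 1) - ↑j) :=
          by exact QAux.pascal_sum (fun j => q' ((n : ℤ) - ↑(k + 1) - ↑j)) k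
      _ = ∑ j ∈ Finset.range (k + 1), k.choose j * q' (((n - 2 : ℕ) : ℤ) - ↑k - ↑j)
          + ∑ j ∈ Finset.range (k + 1), k.choose j * q' (((n - 1 : ℕ) : ℤ) - ↑k - ↑j) := by
          have e1 : ∑ j ∈ Finset.range (k + 1), k.choose j * q' ((n : ℤ) - ↑(k + 1) - ↑(j + 1))
              = ∑ j ∈ Finset.range (k + 1), k.choose j * q' (((n - 2 : ℕ) : ℤ) - ↑k - ↑j) :=
            Finset.sum_congr rfl (fun j _ => by rw [hc2 j])
          have e2 : ∑ j ∈ Finset.range (k + 1), k.choose j * q' ((n : ℤ) - ↑(k + 1) - ↑j)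
              = ∑ j ∈ Finset.range (k + 1), k.choose j * q' (((n - 1 : ℕ) : ℤ) - ↑k - ↑j) :=
            Finset.sum_congr rfl (fun j _ => by rw [hc1 j])
          rw [e1, e2]
      _ ≤ Nat.fib (n - 2) + Nat.fib (n - 1) :=
          Nat.add_le_add (ih (n - 2) (by omega)) (ih (n - 1) (by omega))
      _ = Nat.fib n := hfib
end
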